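/- Reporting only the observed cost savings for the controlled zones 1,…,m overestimates the whole-building cost savings by exactly Σ_{i=1}^m Σ_{j=m+1}^n α_{ij} ∫_0^τ a_j(t) (T_i(t) − T̃_i(t)) dt; that is, Σ_{i=1}^m S_i − S = Σ_{i=1}^m Σ_{j=m+1}^n α_{ij} ∫_0^τ a_j(t) x_i(t) dt. -/
import Mathlib


/-- Reporting only the observed cost savings for the controlled
zones `1,…,m` overestimates the whole-building cost savings by exactly
`Σ_{i=1}^m Σ_{j=m+1}^n α_{ij} ∫_0^τ a_j(t) (T_i(t) − T̃_i(t)) dt`. -/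
theorem controlled_zone_savings_overestimation
    (n m : ℕ) (hm : 1 ≤ m) (hmn : m ≤ n)
    (τ : ℝ) (hτ : 0 < τ)
    (T Tt q qt w : ℕ → ℝ → ℝ)
    (C : ℕ → ℝ) (α : ℕ → ℕ → ℝ) (a : ℕ → ℝ → ℝ)
    (hC : ∀ i, 0 < C i)
    (hα : ∀ i j, 0 ≤ α i j)
    (hsym : ∀ i j, α i j = α j i)
    (hq : ∀ i, Continuous (q i)) (hqt : ∀ i, Continuous (qt i))
    (ha : ∀ i, ContDiff ℝ 1 (a i))
    (hdyn : ∀ i ∈ Finset.Icc 1 n, ∀ t ∈ Set.Icc (0 : ℝ) τ,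
      HasDerivAt (T i)
        (((∑ j ∈ Finset.range (n + 1), α i j * (T j t - T i t)) + q i t + w i t) / C i) t)
    (hdynt : ∀ i ∈ Finset.Icc 1 n, ∀ t ∈ Set.Icc (0 : ℝ) τ,
      HasDerivAt (Tt i)
        (((∑ j ∈ Finset.range (n + 1), α i j * (Tt j t - Tt i t)) + qt i t + w i t) / C i) t)
    (hout : ∀ t, Tt 0 t = T 0 t)
    (hunc : ∀ i ∈ Finset.Icc (m + 1) n, ∀ t ∈ Set.Icc (0 : ℝ) τ, Tt i t = T i t)
    (hinit : ∀ i ∈ Finset.Icc 1 n, Tt i 0 = T i 0)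
    (hfin : ∀ i ∈ Finset.Icc 1 n, Tt i τ = T i τ) :
    (∑ i ∈ Finset.Icc 1 m, ∫ t in (0 : ℝ)..τ, a i t * (q i t - qt i t))
      - (∑ i ∈ Finset.Icc 1 n, ∫ t in (0 : ℝ)..τ, a i t * (q i t - qt i t))
      = ∑ i ∈ Finset.Icc 1 m, ∑ j ∈ Finset.Icc (m + 1) n,
          α i j * ∫ t in (0 : ℝ)..τ, a j t * (T i t - Tt i t) := by
  -- continuity of the temperature trajectories on [0, τ]
  have hTc : ∀ i ∈ Finset.Icc 1 n, ContinuousOn (T i) (Set.Icc 0 τ) :=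
    fun i hi t ht => ((hdyn i hi t ht).continuousAt).continuousWithinAt
  have hTtc : ∀ i ∈ Finset.Icc 1 n, ContinuousOn (Tt i) (Set.Icc 0 τ) :=
    fun i hi t ht => ((hdynt i hi t ht).continuousAt).continuousWithinAt
  have haC : ∀ i, Continuous (a i) := fun i => (ha i).continuous
  -- pointwise identity for uncontrolled zones at interior times
  have key : ∀ i ∈ Finset.Icc (m + 1) n, ∀ t ∈ Set.Ioo (0 : ℝ) τ,
      q i t - qt i t = ∑ j ∈ Finset.Icc 1 m, α i j * (Tt j t - T j t) := by
    intro i hi t ht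
    obtain ⟨hi1, hi2⟩ := Finset.mem_Icc.mp hi
    have hi' : i ∈ Finset.Icc 1 n := Finset.mem_Icc.mpr ⟨by omega, hi2⟩
    have htIcc : t ∈ Set.Icc (0 : ℝ) τ := Set.Ioo_subset_Icc_self ht
    have heq : Tt i =ᶠ[nhds t] T i := by
      filter_upwards [Ioo_mem_nhds ht.1 ht.2] with s hs
      exact hunc i hi s (Set.Ioo_subset_Icc_self hs)
    have h1 := hdynt i hi' t htIcc
    have h2 := hdyn i hi' t htIcc
    have h1' := h1.congr_of_eventuallyEq heq.symm
    have hder := h1'.unique h2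
    have hC' : C i ≠ 0 := (hC i).ne'
    have hAB : (∑ j ∈ Finset.range (n + 1), α i j * (Tt j t - Tt i t)) + qt i t + w i t
        = (∑ j ∈ Finset.range (n + 1), α i j * (T j t - T i t)) + q i t + w i t := by
      field_simp [hC'] at hder
      linarith
    have hTti : Tt i t = T i t := hunc i hi t htIcc
    have hsub : ∑ j ∈ Finset.range (n + 1), α i j * (Tt j t - Tt i t)
        - ∑ j ∈ Finset.range (n + 1), α i j * (T j t - T i t)
        = ∑ j ∈ Finset.range (n + 1), α i j * (Tt j t - T j t) := by
      rw [← Finset.sum_sub_distrib]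
      apply Finset.sum_congr rfl
      intro j _
      rw [hTti]; ring
    have hsum : q i t - qt i t = ∑ j ∈ Finset.range (n + 1), α i j * (Tt j t - T j t) := by
      linarith
    rw [hsum]
    refine (Finset.sum_subset ?_ ?_).symm
    · intro j hj
      simp only [Finset.mem_Icc] at hj
      simp only [Finset.mem_range]
      omega
    · intro j hj hnj
      simp only [Finset.mem_range] at hj
      simp only [Finset.mem_Icc] at hnj
      rcases Nat.eq_zero_or_pos j with h0 | hpos
      · subst h0; rw [hout t]; ring
      · have hj' : j ∈ Finset.Icc (m + 1) n := Finset.mem_Icc.mpr ⟨by omega, by omega⟩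
        rw [hunc j hj' t htIcc]; ring
  -- integral identity for uncontrolled zones
  have S : ∀ i ∈ Finset.Icc (m + 1) n,
      (∫ t in (0 : ℝ)..τ, a i t * (q i t - qt i t))
      = ∑ j ∈ Finset.Icc 1 m, α i j * ∫ t in (0 : ℝ)..τ, a i t * (Tt j t - T j t) := by
    intro i hi
    have step1 : (∫ t in (0 : ℝ)..τ, a i t * (q i t - qt i t))
        = ∫ t in (0 : ℝ)..τ, ∑ j ∈ Finset.Icc 1 m, α i j * (a i t * (Tt j t - T j t)) := by
      apply intervalIntegral.integral_congr_ae
      have hne : ∀ᵐ t : ℝ, t ≠ τ := by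
        rw [MeasureTheory.ae_iff]
        simpa [Set.setOf_eq_eq_singleton] using Real.volume_singleton (a := τ)
      filter_upwards [hne] with t htne hmem
      rw [Set.uIoc_of_le hτ.le] at hmem
      have htIoo : t ∈ Set.Ioo (0 : ℝ) τ := ⟨hmem.1, lt_of_le_of_ne hmem.2 htne⟩
      rw [key i hi t htIoo, Finset.mul_sum]
      apply Finset.sum_congr rfl
      intro j _
      ring
    rw [step1, intervalIntegral.integral_finset_sum]
    · apply Finset.sum_congr rfl
      intro j _
      exact intervalIntegral.integral_const_mul _ _
    · intro j hj
      have hj' : j ∈ Finset.Icc 1 n := by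
        simp only [Finset.mem_Icc] at hj ⊢; omega
      apply ContinuousOn.intervalIntegrable
      rw [Set.uIcc_of_le hτ.le]
      exact continuousOn_const.mul
        (((haC i).continuousOn).mul ((hTtc j hj').sub (hTc j hj')))
  -- split the sum over all zones
  have hdisj : Disjoint (Finset.Icc 1 m) (Finset.Icc (m + 1) n) := by
    rw [Finset.disjoint_left]
    intro j hj1 hj2
    simp only [Finset.mem_Icc] at hj1 hj2
    omega
  have hun : Finset.Icc 1 n = Finset.Icc 1 m ∪ Finset.Icc (m + 1) n := by
    ext j
    simp only [Finset.mem_Icc, Finset.mem_union]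
    omega
  rw [hun, Finset.sum_union hdisj, Finset.sum_congr rfl S]
  -- flip signs and swap the order of summation
  have hnegint : ∀ i j, (∫ t in (0 : ℝ)..τ, a i t * (Tt j t - T j t))
      = - ∫ t in (0 : ℝ)..τ, a i t * (T j t - Tt j t) := by
    intro i j
    rw [← intervalIntegral.integral_neg]
    apply intervalIntegral.integral_congr
    intro t _
    ring
  have hfinal : (∑ i ∈ Finset.Icc (m + 1) n, ∑ j ∈ Finset.Icc 1 m,
      α i j * ∫ t in (0 : ℝ)..τ, a i t * (Tt j t - T j t))
      = - ∑ i ∈ Finset.Icc 1 m, ∑ j ∈ Finset.Icc (m + 1) n,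
          α i j * ∫ t in (0 : ℝ)..τ, a j t * (T i t - Tt i t) := by
    rw [Finset.sum_comm, ← Finset.sum_neg_distrib]
    apply Finset.sum_congr rfl
    intro j _
    rw [← Finset.sum_neg_distrib]
    apply Finset.sum_congr rfl
    intro i _
    rw [hnegint i j, hsym i j]
    ring
  rw [hfinal]
  ring
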